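/- Let f be a circuit injection from a 3-connected graph G onto a graph G' (i.e., f is an injective map on edges, surjective onto the edges of G', such that the image of every circuit of G is a circuit of G', and G' has no isolated vertices). Then for every vertex v of G, the image f(S(v)) of the star of v is either the star S(w) of some vertex w of G', or an independent (pairwise nonadjacent) set of edges of G'. -/

import Mathlib

open SimpleGraph

universe u v

/-- A circuit of `G` is the edge set of a cycle of `G`. -/
def IsCircuit {V : Type u} (G : SimpleGraph V) (C : Set (Sym2 V)) : Prop :=
  ∃ (x : V) (w : G.Walk x x), w.IsCycle ∧ C = {e | e ∈ w.edges}

/-- The set of vertices covered by a set of edges. -/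
def circVerts {V : Type u} (C : Set (Sym2 V)) : Set V :=
  {x | ∃ e ∈ C, x ∈ e}

/-- A set of edges is independent if its edges are pairwise nonadjacent. -/
def IndepEdges {V : Type u} (A : Set (Sym2 V)) : Prop :=
  ∀ e₁ ∈ A, ∀ e₂ ∈ A, e₁ ≠ e₂ → ∀ x : V, x ∈ e₁ → x ∉ e₂

/-- 2-connected: connected, at least 3 vertices, and deleting any one vertex
leaves the graph connected. -/
def TwoConnected {V : Type u} (G : SimpleGraph V) : Prop :=
  G.Connected ∧ (3 : Cardinal) ≤ Cardinal.mk V ∧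
    ∀ x : V, (G.induce {x}ᶜ).Connected

/-- 3-connected: at least 4 vertices and deleting any two vertices leaves
the graph connected. -/
def ThreeConnected {V : Type u} (G : SimpleGraph V) : Prop :=
  (4 : Cardinal) ≤ Cardinal.mk V ∧
    ∀ x y : V, (G.induce ({x, y} : Set V)ᶜ).Connected

/-- k-connected: more than k vertices and deleting any set of fewer than k
vertices leaves the graph connected. -/
def KConnected {V : Type u} (k : ℕ) (G : SimpleGraph V) : Prop :=
  (k : Cardinal) < Cardinal.mk V ∧
    ∀ s : Set V, s.Finite → Nat.card s < k → (G.induce sᶜ).Connected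

/-- The image of a set of edges of `G` under an edge map `f`. -/
def mapEdges {V : Type u} {V' : Type v} (G : SimpleGraph V) (G' : SimpleGraph V')
    (f : G.edgeSet → G'.edgeSet) (C : Set (Sym2 V)) : Set (Sym2 V') :=
  {e' | ∃ e : G.edgeSet, (e : Sym2 V) ∈ C ∧ (f e : Sym2 V') = e'}

/-- The preimage of a set of edges of `G'` under an edge map `f`. -/
def preimEdges {V : Type u} {V' : Type v} (G : SimpleGraph V) (G' : SimpleGraph V')
    (f : G.edgeSet → G'.edgeSet) (S : Set (Sym2 V')) : Set (Sym2 V) :=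
  {e | ∃ he : e ∈ G.edgeSet, (f ⟨e, he⟩ : Sym2 V') ∈ S}

/-- A circuit injection from `G` onto `G'`: an injective, surjective map on
edges carrying every circuit of `G` to a circuit of `G'`, where `G'` has no
isolated vertices. -/
def IsCircuitInjection {V : Type u} {V' : Type v} (G : SimpleGraph V) (G' : SimpleGraph V')
    (f : G.edgeSet → G'.edgeSet) : Prop :=
  Function.Injective f ∧ Function.Surjective f ∧
    (∀ C : Set (Sym2 V), IsCircuit G C → IsCircuit G' (mapEdges G G' f C)) ∧
    ∀ x : V', ∃ y : V', G'.Adj x y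

/-- `G` contains a subgraph of type X with connectors `e₁`, `e₂`, `e₃`:
two vertex-disjoint circuits `CA`, `CB`, edges `e₁ = (a₁,b₁)`, `e₂ = (a₂,b₂)`,
and a path from `a₃` to `b₃` internally disjoint from both circuits, with
`a₁,a₂,a₃` distinct on `CA` and `b₁,b₂,b₃` distinct on `CB`, and `e₃` an edge
of the path. -/
def IsTypeXWith {V : Type u} (G : SimpleGraph V) (e₁ e₂ e₃ : Sym2 V) : Prop :=
  ∃ (a₁ a₂ a₃ b₁ b₂ b₃ : V) (CA CB : Set (Sym2 V)) (P : G.Walk a₃ b₃),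
    IsCircuit G CA ∧ IsCircuit G CB ∧
    Disjoint (circVerts CA) (circVerts CB) ∧
    a₁ ∈ circVerts CA ∧ a₂ ∈ circVerts CA ∧ a₃ ∈ circVerts CA ∧
    b₁ ∈ circVerts CB ∧ b₂ ∈ circVerts CB ∧ b₃ ∈ circVerts CB ∧
    a₁ ≠ a₂ ∧ a₁ ≠ a₃ ∧ a₂ ≠ a₃ ∧ b₁ ≠ b₂ ∧ b₁ ≠ b₃ ∧ b₂ ≠ b₃ ∧
    G.Adj a₁ b₁ ∧ G.Adj a₂ b₂ ∧ e₁ = s(a₁, b₁) ∧ e₂ = s(a₂, b₂) ∧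
    P.IsPath ∧
    (∀ x ∈ P.support, x ≠ a₃ → x ≠ b₃ → x ∉ circVerts CA ∪ circVerts CB) ∧
    e₃ ∈ P.edges

/-- `G` is (all of) a graph of type X with connectors `e₁`, `e₂`, `e₃`. -/
def IsTypeXGraph {V : Type u} (G : SimpleGraph V) (e₁ e₂ e₃ : Sym2 V) : Prop :=
  ∃ (a₁ a₂ a₃ b₁ b₂ b₃ : V) (CA CB : Set (Sym2 V)) (P : G.Walk a₃ b₃),
    IsCircuit G CA ∧ IsCircuit G CB ∧
    Disjoint (circVerts CA) (circVerts CB) ∧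
    a₁ ∈ circVerts CA ∧ a₂ ∈ circVerts CA ∧ a₃ ∈ circVerts CA ∧
    b₁ ∈ circVerts CB ∧ b₂ ∈ circVerts CB ∧ b₃ ∈ circVerts CB ∧
    a₁ ≠ a₂ ∧ a₁ ≠ a₃ ∧ a₂ ≠ a₃ ∧ b₁ ≠ b₂ ∧ b₁ ≠ b₃ ∧ b₂ ≠ b₃ ∧
    G.Adj a₁ b₁ ∧ G.Adj a₂ b₂ ∧ e₁ = s(a₁, b₁) ∧ e₂ = s(a₂, b₂) ∧
    P.IsPath ∧
    (∀ x ∈ P.support, x ≠ a₃ → x ≠ b₃ → x ∉ circVerts CA ∪ circVerts CB) ∧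
    e₃ ∈ P.edges ∧
    G.edgeSet = CA ∪ CB ∪ {e₁, e₂} ∪ {e | e ∈ P.edges}


/-! ### Auxiliary lemmas -/


section Aux
variable {V : Type u} {G : SimpleGraph V}

lemma aux_third (h : (4 : Cardinal) ≤ Cardinal.mk V) (x y : V) :
    ∃ z : V, z ≠ x ∧ z ≠ y := by
  by_contra hc
  push_neg at hc
  have hsub : (Set.univ : Set V) ⊆ ({x, y} : Set V) := by
    intro z _
    rcases eq_or_ne z x with rfl | hz
    · exact Set.mem_insert _ _
    · exact Set.mem_insert_iff.mpr (Or.inr (hc z hz))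
  have h1 : Cardinal.mk V ≤ 2 := by
    calc Cardinal.mk V = Cardinal.mk (Set.univ : Set V) := Cardinal.mk_univ.symm
    _ ≤ Cardinal.mk ({x, y} : Set V) := Cardinal.mk_le_mk_of_subset hsub
    _ ≤ Cardinal.mk ({y} : Set V) + 1 := Cardinal.mk_insert_le
    _ = 2 := by rw [Cardinal.mk_singleton]; norm_num
  have := h.trans h1
  norm_num at this

lemma aux_mem_support_of_edge {a b x : V} (p : G.Walk a b) {e : Sym2 V}
    (he : e ∈ p.edges) (hx : x ∈ e) : x ∈ p.support := by
  induction e with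
  | h u w =>
    rcases Sym2.mem_iff.mp hx with rfl | rfl
    · exact p.fst_mem_support_of_mem_edges he
    · exact p.snd_mem_support_of_mem_edges he

lemma aux_end_mem_tail {d c : V} (p : G.Walk d c) (hp : ¬ p.Nil) :
    c ∈ p.support.tail := by
  cases p with
  | nil => simp at hp
  | cons h q => simpa using q.end_mem_support

lemma aux_path_loop_nil {u : V} (p : G.Walk u u) (hp : p.IsPath) : p = Walk.nil := by
  cases p with
  | nil => rfl
  | cons h q =>
    exfalso
    rw [Walk.cons_isPath_iff] at hp
    exact hp.2 q.end_mem_support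

/-- In a nontrivial path ending at `w`, there is a unique edge containing `w`. -/
lemma aux_edges_at_end {c w : V} (p : G.Walk c w) (hp : p.IsPath) (hne : c ≠ w) :
    ∃ eL ∈ p.edges, w ∈ eL ∧ ∀ e ∈ p.edges, w ∈ e → e = eL := by
  induction p with
  | nil => exact absurd rfl hne
  | @cons a d b h q ih =>
    rw [Walk.cons_isPath_iff] at hp
    rcases eq_or_ne d b with heq | hdb
    · subst heq
      have hqnil : q = Walk.nil := aux_path_loop_nil q hp.1
      subst hqnil
      refine ⟨s(a, d), by simp, by simp, ?_⟩
      intro e he _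
      simpa using he
    · obtain ⟨eL, heL, hweL, huniq⟩ := ih hp.1 hdb
      refine ⟨eL, by simp [heL], hweL, ?_⟩
      intro e he hwe
      rcases List.mem_cons.mp (by simpa using he) with rfl | he'
      · exfalso
        rcases Sym2.mem_iff.mp hwe with h1 | h1
        · exact hne h1.symm
        · exact hdb h1.symm
      · exact huniq e he' hwe

/-- An internal vertex of a path lies on two distinct edges of the path. -/
lemma aux_two_edges_internal {x y z : V} (p : G.Walk x y) (hp : p.IsPath)
    (hz : z ∈ p.support) (hzx : z ≠ x) (hzy : z ≠ y) :
    ∃ e₁ ∈ p.edges, ∃ e₂ ∈ p.edges, z ∈ e₁ ∧ z ∈ e₂ ∧ e₁ ≠ e₂ := by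
  induction p with
  | nil =>
    exfalso
    exact hzx (by simpa using hz)
  | @cons a d b h q ih =>
    rw [Walk.cons_isPath_iff] at hp
    rcases eq_or_ne z d with heq | hzd
    · subst heq
      have hqnn : ¬ q.Nil := Walk.not_nil_of_ne hzy
      obtain ⟨u', hadj, q', rfl⟩ := (Walk.not_nil_iff).mp hqnn
      refine ⟨s(a, z), by simp, s(z, u'), by simp, by simp, by simp, ?_⟩
      intro hcontra
      rw [Sym2.eq_iff] at hcontra
      rcases hcontra with ⟨h1, h2⟩ | ⟨h1, h2⟩
      · exact hzx h1.symm
      · exact hp.2 (by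
          rw [Walk.support_cons]
          exact List.mem_cons.mpr (Or.inr (h1 ▸ q'.start_mem_support)))
    · have hz' : z ∈ q.support := by
        rcases (by simpa using hz : z = a ∨ z ∈ q.support) with rfl | hz'
        · exact absurd rfl hzx
        · exact hz'
      obtain ⟨e₁, he₁, e₂, he₂, h1, h2, h3⟩ := ih hp.1 hz' hzd hzy
      exact ⟨e₁, by simp [he₁], e₂, by simp [he₂], h1, h2, h3⟩

end Aux



section Aux2
variable {V : Type u} {G : SimpleGraph V}


lemma aux_mem_support_rotate [DecidableEq V] {u w : V} (p : G.Walk u u) (hnn : ¬ p.Nil)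
    (hw : w ∈ p.support) (y : V) : y ∈ (p.rotate w hw).support ↔ y ∈ p.support := by
  have h1 : (p.rotate w hw).support.tail ~r p.support.tail := p.support_rotate w hw
  have h2 := h1.perm.mem_iff (a := y)
  constructor
  · intro hy
    rcases (Walk.mem_support_iff _).mp hy with rfl | hy'
    · exact hw
    · rw [Walk.support_eq_cons p]
      exact List.mem_cons.mpr (Or.inr (h2.mp hy'))
  · intro hy
    rcases (Walk.mem_support_iff _).mp hy with rfl | hy'
    · -- y = u : u is the end of p, in tail
      have := aux_end_mem_tail p hnn
      rw [Walk.support_eq_cons (p.rotate w hw)]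
      exact List.mem_cons.mpr (Or.inr (h2.mpr this))
    · rw [Walk.support_eq_cons (p.rotate w hw)]
      exact List.mem_cons.mpr (Or.inr (h2.mpr hy'))

/-- In a cycle, each vertex covered by an edge lies on exactly two edges. -/
lemma aux_cycle_two_edges [DecidableEq V] {u w : V} (p : G.Walk u u) (hp : p.IsCycle) {e : Sym2 V}
    (he : e ∈ p.edges) (hw : w ∈ e) :
    ∃ e' ∈ p.edges, w ∈ e' ∧ e' ≠ e ∧ ∀ e'' ∈ p.edges, w ∈ e'' → e'' = e ∨ e'' = e' := by
  have hws : w ∈ p.support := aux_mem_support_of_edge p he hw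
  have hq : (p.rotate w hws).IsCycle := hp.rotate hws
  have hmem : ∀ e₀ : Sym2 V, e₀ ∈ (p.rotate w hws).edges ↔ e₀ ∈ p.edges := fun e₀ =>
    (p.rotate_edges w hws).perm.mem_iff
  set q := p.rotate w hws with hqdef
  clear_value q
  -- q : walk w w, cycle
  cases q with
  | nil => exact absurd rfl hq.ne_nil
  | @cons _ c _ hadj q₀ =>
    rw [Walk.cons_isCycle_iff] at hq
    have hcw : c ≠ w := fun h => G.irrefl (h ▸ hadj)
    obtain ⟨eL, heL, hweL, huniq⟩ := aux_edges_at_end q₀ hq.1 hcw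
    have hLne : s(w, c) ≠ eL := fun h => hq.2 (h ▸ heL)
    -- the two edges at w in q are s(w,c) and eL
    have key : ∀ e'' ∈ p.edges, w ∈ e'' → e'' = s(w, c) ∨ e'' = eL := by
      intro e'' he'' hwe''
      rcases List.mem_cons.mp (by simpa using (hmem e'').mpr he'') with h' | h'
      · exact Or.inl h'
      · exact Or.inr (huniq e'' h' hwe'')
    have he1 : s(w, c) ∈ p.edges := (hmem _).mp (by simp)
    have he2 : eL ∈ p.edges := (hmem _).mp (by simp [heL])
    rcases key e he hw with rfl | rfl
    · exact ⟨eL, he2, hweL, hLne.symm, fun e'' h1 h2 => (key e'' h1 h2)⟩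
    · refine ⟨s(w, c), he1, by simp, hLne, fun e'' h1 h2 => (key e'' h1 h2).symm⟩

/-- First meeting point of a walk with a set. -/
lemma aux_first_meet {S : Set V} :
    ∀ {b a : V} (R : G.Walk b a), (∃ y ∈ R.support, y ∈ S) →
    ∃ (c : V) (R1 : G.Walk b c), c ∈ S ∧ (∀ y ∈ R1.support, y ∈ S → y = c) ∧
      (∀ y ∈ R1.support, y ∈ R.support) ∧ (R.IsPath → R1.IsPath) := by
  intro b a R
  induction R with
  | nil =>
    intro hex
    obtain ⟨y, hy, hyS⟩ := hex
    rw [Walk.support_nil, List.mem_singleton] at hy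
    subst hy
    exact ⟨_, Walk.nil, hyS, by simp, by simp, fun _ => Walk.IsPath.nil⟩
  | @cons t s' a h q ih =>
    intro hex
    by_cases hb : t ∈ S
    · exact ⟨t, Walk.nil, hb, by simp, by simp, fun _ => Walk.IsPath.nil⟩
    · have hex' : ∃ y ∈ q.support, y ∈ S := by
        obtain ⟨y, hy, hyS⟩ := hex
        rcases (by simpa using hy : y = t ∨ y ∈ q.support) with rfl | hy'
        · exact absurd hyS hb
        · exact ⟨y, hy', hyS⟩
      obtain ⟨c, R1', hcS, huniq, hsub, hpath⟩ := ih hex'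
      refine ⟨c, Walk.cons h R1', hcS, ?_, ?_, ?_⟩
      · intro y hy hyS
        rcases (by simpa using hy : y = t ∨ y ∈ R1'.support) with rfl | hy'
        · exact absurd hyS hb
        · exact huniq y hy' hyS
      · intro y hy
        rcases (by simpa using hy : y = t ∨ y ∈ R1'.support) with rfl | hy'
        · simp
        · simp [hsub y hy']
      · intro hP
        rw [Walk.cons_isPath_iff] at hP ⊢
        exact ⟨hpath hP.1, fun hc => hP.2 (hsub t hc)⟩

/-- Hom from an induced subgraph into the ambient graph. -/
def auxHomInduce (G : SimpleGraph V) (s : Set V) : (G.induce s) →g G :=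
  ⟨Subtype.val, fun h => h⟩

lemma aux_avoid_walk {s : Set V} (hconn : (G.induce sᶜ).Connected)
    {a b : V} (ha : a ∉ s) (hb : b ∉ s) :
    ∃ p : G.Walk a b, p.IsPath ∧ ∀ x ∈ p.support, x ∉ s := by
  classical
  obtain ⟨w⟩ := hconn.preconnected ⟨a, ha⟩ ⟨b, hb⟩
  refine ⟨(w.map (auxHomInduce G sᶜ)).bypass, Walk.bypass_isPath _, ?_⟩
  intro x hx
  have hx' := Walk.support_bypass_subset _ hx
  replace hx' : x ∈ w.support.map (auxHomInduce G sᶜ) := by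
    rw [← Walk.support_map]; exact hx'
  rcases List.mem_map.mp hx' with ⟨⟨y, hy⟩, _, rfl⟩
  exact hy

/-- If the graph stays connected after deleting any vertex (and there are ≥ 3
vertices), then for any edge there is a path between its ends avoiding it. -/
lemma aux_unbridge (hdel : ∀ x : V, (G.induce {x}ᶜ).Connected)
    (hthree : ∀ a b : V, ∃ t : V, t ≠ a ∧ t ≠ b)
    {a b : V} (hab : G.Adj a b) :
    ∃ p : G.Walk a b, p.IsPath ∧ s(a, b) ∉ p.edges := by
  classical
  set K := G.deleteEdges {s(a, b)} with hK
  obtain ⟨t, hta, htb⟩ := hthree a b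
  have hreach : ∀ (z x y : V), z ∈ s(a, b) → x ≠ z → y ≠ z → K.Reachable x y := by
    intro z x y hz hxz hyz
    obtain ⟨p, hp, hps⟩ := aux_avoid_walk (hdel z) (by simpa using hxz) (by simpa using hyz)
    refine ⟨p.transfer K ?_⟩
    intro e heP
    rw [hK, edgeSet_deleteEdges]
    refine ⟨p.edges_subset_edgeSet heP, ?_⟩
    intro hcontra
    rw [Set.mem_singleton_iff] at hcontra
    subst hcontra
    exact hps z (aux_mem_support_of_edge p heP hz) rfl
  have h1 : K.Reachable a t := hreach b a t (by simp) (G.ne_of_adj hab) htb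
  have h2 : K.Reachable t b := hreach a t b (by simp) hta (G.ne_of_adj hab).symm
  obtain ⟨q⟩ := h1.trans h2
  have hqe : ∀ e ∈ q.bypass.edges, e ∈ G.edgeSet := by
    intro e heq
    have := q.edges_subset_edgeSet (q.edges_bypass_subset heq)
    rw [hK, edgeSet_deleteEdges] at this
    exact this.1
  refine ⟨(q.bypass).transfer G hqe, (q.bypass_isPath).transfer hqe, ?_⟩
  rw [Walk.edges_transfer]
  intro hcontra
  have := q.edges_subset_edgeSet (q.edges_bypass_subset hcontra)
  rw [hK, edgeSet_deleteEdges] at this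
  exact this.2 rfl



end Aux2

section Aux3
variable {V : Type u} {G : SimpleGraph V} [DecidableEq V]


/-- Splitting a cycle at a vertex into two paths. -/
lemma aux_cycle_split {c d : V} (C : G.Walk c c) (hC : C.IsCycle) (hd : d ∈ C.support)
    (hdc : d ≠ c) :
    ∃ (A : G.Walk c d) (B : G.Walk d c), A.IsPath ∧ B.IsPath ∧
      (∀ y, y ∈ C.support ↔ y ∈ A.support ∨ y ∈ B.support) := by
  set A := C.takeUntil d hd with hA
  set B := C.dropUntil d hd with hB
  have hspec : A.append B = C := C.take_spec hd
  have hT : C.support.tail.Nodup := hC.support_nodup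
  have hsplit : C.support.tail = A.support.tail ++ B.support.tail := by
    have := Walk.tail_support_append A B
    rw [hspec] at this
    exact this
  rw [hsplit] at hT
  have hdisj := List.disjoint_of_nodup_append hT
  have hAnn : ¬ A.Nil := Walk.not_nil_of_ne (Ne.symm hdc)
  have hBnn : ¬ B.Nil := Walk.not_nil_of_ne hdc
  have hcB : c ∈ B.support.tail := aux_end_mem_tail B hBnn
  have hdA : d ∈ A.support.tail := aux_end_mem_tail A hAnn
  have hApath : A.IsPath := by
    apply Walk.IsPath.mk'
    rw [Walk.support_eq_cons A]
    exact List.nodup_cons.mpr ⟨fun hc' => hdisj hc' hcB, hT.of_append_left⟩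
  have hBpath : B.IsPath := by
    apply Walk.IsPath.mk'
    rw [Walk.support_eq_cons B]
    exact List.nodup_cons.mpr ⟨fun hd' => hdisj hdA hd', hT.of_append_right⟩
  refine ⟨A, B, hApath, hBpath, ?_⟩
  intro y
  have := Walk.mem_support_append_iff A B (t := y)
  rw [hspec] at this
  exact this

/-- Any two distinct vertices of a "2-connected" graph lie on a common cycle. -/
lemma aux_cycle_lemma (hdel : ∀ x : V, (G.induce {x}ᶜ).Connected)
    (hthree : ∀ a b : V, ∃ t : V, t ≠ a ∧ t ≠ b) :
    ∀ (n : ℕ) {a b : V}, a ≠ b → ∀ (p : G.Walk a b), p.length ≤ n →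
      ∃ (x : V) (C : G.Walk x x), C.IsCycle ∧ a ∈ C.support ∧ b ∈ C.support := by
  intro n
  induction n with
  | zero =>
    intro a b hab p hp
    exact absurd (p.eq_of_length_eq_zero (Nat.le_zero.mp hp)) hab
  | succ n ih =>
    intro a b hab p hlen
    have hqp : p.bypass.IsPath := p.bypass_isPath
    have hqlen : p.bypass.length ≤ n + 1 := le_trans (Walk.length_bypass_le p) hlen
    by_cases hle : p.bypass.length ≤ n
    · exact ih hab p.bypass hle
    · set q := p.bypass with hqdef
      have hlen1 : q.length = n + 1 := le_antisymm hqlen (not_le.mp hle)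
      have hqrnn : ¬ q.reverse.Nil := Walk.not_nil_of_ne (Ne.symm hab)
      obtain ⟨b', hbb', r, hqr⟩ := (Walk.not_nil_iff).mp hqrnn
      -- hbb' : G.Adj b b', r : G.Walk b' a
      have hrpath : r.IsPath := by
        have h1 := hqp.reverse
        rw [hqr] at h1
        exact h1.of_cons
      have hrlen : r.length = n := by
        have h1 := congrArg Walk.length hqr
        rw [Walk.length_reverse, hlen1, Walk.length_cons] at h1
        omega
      rcases Nat.eq_zero_or_pos n with hn0 | hnpos
      · -- base case: a and b are adjacent
        subst hn0
        have hb'a : b' = a := by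
          have : r.Nil := Walk.nil_iff_length_eq.mpr hrlen
          exact this.eq
        subst hb'a
        obtain ⟨P, hPpath, hPe⟩ := aux_unbridge hdel hthree (hbb'.symm : G.Adj b' b)
        refine ⟨b, Walk.cons hbb' P, ?_, ?_, ?_⟩
        · rw [Walk.cons_isCycle_iff]
          refine ⟨hPpath, ?_⟩
          rw [Sym2.eq_swap]
          exact hPe
        · rw [Walk.support_cons]
          exact List.mem_cons.mpr (Or.inr P.start_mem_support)
        · exact Walk.start_mem_support _
      · -- inductive case
        have hab' : a ≠ b' := by
          intro hcontra
          subst hcontra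
          have : r = Walk.nil := aux_path_loop_nil r hrpath
          rw [this] at hrlen
          simp at hrlen
          omega
        obtain ⟨x, C, hC, haC, hb'C⟩ := ih hab' r.reverse (by rw [Walk.length_reverse]; omega)
        by_cases hbC : b ∈ C.support
        · exact ⟨x, C, hC, haC, hbC⟩
        · -- surgery
          have hbneb' : b ≠ b' := G.ne_of_adj hbb'
          obtain ⟨R₀, hR₀path, hR₀av⟩ := aux_avoid_walk (G := G) (s := {b'}) (hdel b')
            (by simpa using hbneb') (by simpa using hab')
          obtain ⟨c, R1, hcC, huniq, hsub, hR1p⟩ := aux_first_meet (S := {y | y ∈ C.support}) R₀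
            ⟨a, R₀.end_mem_support, haC⟩
          have hR1path : R1.IsPath := hR1p hR₀path
          have hCnn : ¬ C.Nil := hC.not_nil
          have hcC' : c ∈ C.support := hcC
          set C' := C.rotate c hcC' with hC'def
          have hC'cyc : C'.IsCycle := hC.rotate hcC'
          have hmemrot : ∀ y, y ∈ C'.support ↔ y ∈ C.support :=
            aux_mem_support_rotate C hCnn hcC'
          have hb'notR₀ : b' ∉ R₀.support := fun hcon => hR₀av b' hcon rfl
          have hb'c : b' ≠ c := by
            intro hcontra
            exact hb'notR₀ (hcontra ▸ hsub c R1.end_mem_support)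
          have hb'C' : b' ∈ C'.support := (hmemrot b').mpr hb'C
          obtain ⟨A, B, hApath, hBpath, hmemAB⟩ := aux_cycle_split C' hC'cyc hb'C' hb'c
          have harc : ∃ arc : G.Walk c b', arc.IsPath ∧ a ∈ arc.support ∧
              (∀ y ∈ arc.support, y ∈ C.support) := by
            have haC' : a ∈ C'.support := (hmemrot a).mpr haC
            rcases (hmemAB a).mp haC' with haA | haB
            · exact ⟨A, hApath, haA, fun y hy => (hmemrot y).mp ((hmemAB y).mpr (Or.inl hy))⟩
            · refine ⟨B.reverse, hBpath.reverse, ?_, ?_⟩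
              · rw [Walk.support_reverse, List.mem_reverse]; exact haB
              · intro y hy
                rw [Walk.support_reverse, List.mem_reverse] at hy
                exact (hmemrot y).mp ((hmemAB y).mpr (Or.inr hy))
          obtain ⟨arc, harcpath, haarc, harcsub⟩ := harc
          set X := R1.append arc with hX
          have hXpath : X.IsPath := by
            apply Walk.IsPath.mk'
            rw [Walk.support_append]
            apply List.Nodup.append hR1path.support_nodup harcpath.support_nodup.tail
            intro y hy1 hy2
            have hyC : y ∈ C.support := harcsub y (List.mem_of_mem_tail hy2)
            have : y = c := huniq y hy1 hyC
            subst this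
            have : y ∉ arc.support.tail := by
              have h1 := harcpath.support_nodup
              rw [Walk.support_eq_cons arc] at h1
              exact (List.nodup_cons.mp h1).1
            exact this hy2
          have hXedge : s(b', b) ∉ X.edges := by
            rw [hX, Walk.edges_append]
            intro hcontra
            rcases List.mem_append.mp hcontra with h' | h'
            · exact hb'notR₀ (hsub b' (aux_mem_support_of_edge R1 h' (by simp)))
            · exact hbC (harcsub b (aux_mem_support_of_edge arc h' (by simp)))
          refine ⟨b', Walk.cons hbb'.symm X, ?_, ?_, ?_⟩
          · rw [Walk.cons_isCycle_iff]
            exact ⟨hXpath, hXedge⟩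
          · rw [Walk.support_cons]
            refine List.mem_cons.mpr (Or.inr ?_)
            show a ∈ (R1.append arc).support
            exact (Walk.mem_support_append_iff R1 arc).mpr (Or.inr haarc)
          · rw [Walk.support_cons]
            refine List.mem_cons.mpr (Or.inr ?_)
            rw [hX]
            exact X.start_mem_support
end Aux3




section Apex
variable {V : Type u}

/-- Delete all edges at `v` except `e₁`, `e₂`. -/
def auxDel (G : SimpleGraph V) (v : V) (e₁ e₂ : Sym2 V) : SimpleGraph V :=
  G.deleteEdges {e | v ∈ e ∧ e ≠ e₁ ∧ e ≠ e₂}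

/-- Add an apex vertex adjacent to `x` and `y`. -/
def auxApex (H : SimpleGraph V) (x y : V) : SimpleGraph (Option V) where
  Adj a b := (∃ a' b', a = some a' ∧ b = some b' ∧ H.Adj a' b') ∨
             (a = none ∧ (b = some x ∨ b = some y)) ∨
             (b = none ∧ (a = some x ∨ a = some y))
  symm := by
    constructor
    rintro a b (⟨a', b', rfl, rfl, h⟩ | ⟨rfl, h⟩ | ⟨rfl, h⟩)
    · exact Or.inl ⟨b', a', rfl, rfl, h.symm⟩
    · exact Or.inr (Or.inr ⟨rfl, h⟩)
    · exact Or.inr (Or.inl ⟨rfl, h⟩)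
  loopless := by
    constructor
    rintro a (⟨a', b', rfl, h1, h⟩ | ⟨rfl, h | h⟩ | ⟨rfl, h | h⟩) <;>
      simp_all <;> exact H.irrefl (by simpa using h)

@[simp] lemma auxApex_adj_some_some {H : SimpleGraph V} {x y a b : V} :
    (auxApex H x y).Adj (some a) (some b) ↔ H.Adj a b := by
  constructor
  · rintro (⟨a', b', h1, h2, h⟩ | ⟨h, _⟩ | ⟨h, _⟩) <;> simp_all
  · intro h; exact Or.inl ⟨a, b, rfl, rfl, h⟩

@[simp] lemma auxApex_adj_none_some {H : SimpleGraph V} {x y b : V} :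
    (auxApex H x y).Adj none (some b) ↔ b = x ∨ b = y := by
  constructor
  · rintro (⟨a', b', h1, h2, h⟩ | ⟨_, h | h⟩ | ⟨h, _⟩) <;> simp_all
  · rintro (rfl | rfl)
    · exact Or.inr (Or.inl ⟨rfl, Or.inl rfl⟩)
    · exact Or.inr (Or.inl ⟨rfl, Or.inr rfl⟩)

lemma auxApex_adj_none {H : SimpleGraph V} {x y : V} {b : Option V}
    (h : (auxApex H x y).Adj none b) : b = some x ∨ b = some y := by
  rcases h with ⟨a', b', h1, h2, h⟩ | ⟨_, h⟩ | ⟨h1, h⟩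
  · simp_all
  · exact h
  · simp_all

/-- The `some` homomorphism into the apex graph. -/
def auxSome (H : SimpleGraph V) (x y : V) : H →g auxApex H x y :=
  ⟨some, fun h => Or.inl ⟨_, _, rfl, rfl, h⟩⟩

@[simp] lemma auxSome_apply {H : SimpleGraph V} {x y a : V} :
    (auxSome H x y) a = some a := rfl

lemma auxDel_adj {G : SimpleGraph V} {v : V} {e₁ e₂ : Sym2 V} {a b : V} :
    (auxDel G v e₁ e₂).Adj a b ↔ G.Adj a b ∧ ¬(v ∈ s(a, b) ∧ s(a, b) ≠ e₁ ∧ s(a, b) ≠ e₂) := by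
  rw [auxDel, deleteEdges_adj]
  rfl

lemma auxDel_adj_of_ne {G : SimpleGraph V} {v : V} {e₁ e₂ : Sym2 V} {a b : V}
    (ha : a ≠ v) (hb : b ≠ v) (h : G.Adj a b) : (auxDel G v e₁ e₂).Adj a b := by
  rw [auxDel_adj]
  refine ⟨h, ?_⟩
  rintro ⟨hv, -, -⟩
  rcases Sym2.mem_iff.mp hv with rfl | rfl
  · exact ha rfl
  · exact hb rfl

lemma auxDel_edge_at_v {G : SimpleGraph V} {v : V} {e₁ e₂ : Sym2 V} {e : Sym2 V}
    (he : e ∈ (auxDel G v e₁ e₂).edgeSet) (hv : v ∈ e) : e = e₁ ∨ e = e₂ := by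
  rw [auxDel, edgeSet_deleteEdges] at he
  by_contra hc
  push_neg at hc
  exact he.2 ⟨hv, hc.1, hc.2⟩

/-- Lift a walk with support in `T` to the induced subgraph. -/
lemma aux_reach_induce {W : Type v} {Γ : SimpleGraph W} {T : Set W} :
    ∀ {a b : W} (p : Γ.Walk a b) (hp : ∀ z ∈ p.support, z ∈ T),
      (Γ.induce T).Reachable ⟨a, hp a p.start_mem_support⟩ ⟨b, hp b p.end_mem_support⟩ := by
  intro a b p
  induction p with
  | nil => intro hp; exact Reachable.refl _
  | @cons a c b h q ih =>
    intro hp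
    have hq : ∀ z ∈ q.support, z ∈ T := fun z hz => hp z (by simp [hz])
    have h1 : (Γ.induce T).Adj ⟨a, hp a (by simp)⟩ ⟨c, hq c q.start_mem_support⟩ := h
    exact (h1.reachable).trans (ih hq)
end Apex

section ApexConn
variable {V : Type u} {G : SimpleGraph V}

lemma aux_apex_conn
    (hpair : ∀ a b : V, (G.induce ({a, b} : Set V)ᶜ).Connected)
    {v u₁ u₂ x y : V} (hxv : x ≠ v) (hyv : y ≠ v) (hxy : x ≠ y)
    (hu12 : u₁ ≠ u₂) (hadj1 : G.Adj v u₁) (hadj2 : G.Adj v u₂)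
    (c : Option V) :
    ((auxApex (auxDel G v s(v, u₁) s(v, u₂)) x y).induce {c}ᶜ).Connected := by
  classical
  set H := auxDel G v s(v, u₁) s(v, u₂) with hHdef
  set K := auxApex H x y with hKdef
  have hHv1 : H.Adj v u₁ := by
    rw [hHdef, auxDel_adj]
    exact ⟨hadj1, by simp⟩
  have hHv2 : H.Adj v u₂ := by
    rw [hHdef, auxDel_adj]
    exact ⟨hadj2, by simp⟩
  -- walks avoiding v and t, mapped into K
  have reachK : ∀ (t a b : V), a ≠ v → a ≠ t → b ≠ v → b ≠ t →
      ∃ p : K.Walk (some a) (some b),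
        ∀ z ∈ p.support, z ≠ none ∧ z ≠ some v ∧ z ≠ some t := by
    intro t a b hav hat hbv hbt
    obtain ⟨p, hppath, hpav⟩ := aux_avoid_walk (s := ({v, t} : Set V)) (hpair v t)
      (a := a) (b := b) (by simp [hav, hat]) (by simp [hbv, hbt])
    have hedges : ∀ e ∈ p.edges, e ∈ H.edgeSet := by
      intro e he
      induction e with
      | h e1 e2 =>
        have h1 : e1 ∈ p.support := p.fst_mem_support_of_mem_edges he
        have h2 : e2 ∈ p.support := p.snd_mem_support_of_mem_edges he
        have hne1 : e1 ≠ v := fun hc => (hpav e1 h1) (by simp [hc])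
        have hne2 : e2 ≠ v := fun hc => (hpav e2 h2) (by simp [hc])
        exact auxDel_adj_of_ne hne1 hne2 (p.adj_of_mem_edges he)
    set pH := p.transfer H hedges with hpH
    set pK := pH.map (auxSome H x y) with hpK
    refine ⟨pK, ?_⟩
    intro z hz
    replace hz : z ∈ pH.support.map (auxSome H x y) := by
      rw [← Walk.support_map]; exact hz
    rcases List.mem_map.mp hz with ⟨z₀, hz₀, rfl⟩
    rw [hpH, Walk.support_transfer] at hz₀
    have hz₀v : z₀ ≠ v := fun hc => (hpav z₀ hz₀) (by simp [hc])
    have hz₀t : z₀ ≠ t := fun hc => (hpav z₀ hz₀) (by simp [hc])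
    have hzz : ((auxSome H x y) z₀ : Option V) = some z₀ := rfl
    rw [hzz]
    exact ⟨by simp, by simpa using hz₀v, by simpa using hz₀t⟩
  cases c with
  | none =>
    -- deleting the apex: all `some` vertices
    have hbase : (some u₁ : Option V) ∈ ({(none : Option V)}ᶜ : Set (Option V)) := by simp
    rw [connected_iff]
    refine ⟨?_, ⟨⟨some u₁, hbase⟩⟩⟩
    have key : ∀ z : ({(none : Option V)}ᶜ : Set (Option V)),
        (K.induce {(none : Option V)}ᶜ).Reachable z ⟨some u₁, hbase⟩ := by
      rintro ⟨z, hzT⟩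
      cases z with
      | none => exact absurd hzT (by simp)
      | some a =>
        rcases eq_or_ne a u₁ with rfl | hau₁
        · exact Reachable.refl _
        rcases eq_or_ne a v with rfl | hav
        · refine Adj.reachable ?_
          show K.Adj (some a) (some u₁)
          rw [hKdef, auxApex_adj_some_some]
          exact hHv1
        · obtain ⟨p, hpsup⟩ := reachK v a u₁ hav hav (G.ne_of_adj hadj1).symm
            (G.ne_of_adj hadj1).symm
          have hsub : ∀ z ∈ p.support, z ∈ ({(none : Option V)}ᶜ : Set (Option V)) := by
            intro z hz
            simpa using (hpsup z hz).1
          exact aux_reach_induce p hsub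
    intro z₁ z₂
    exact (key z₁).trans (key z₂).symm
  | some t =>
    set w₀ := if u₁ = t then u₂ else u₁ with hw₀def
    have hw₀t : w₀ ≠ t := by
      rw [hw₀def]; split
      · rename_i h; exact fun hc => hu12 (h.trans hc.symm)
      · assumption
    have hHvw₀ : H.Adj v w₀ := by
      rw [hw₀def]; split
      · exact hHv2
      · exact hHv1
    have hw₀v : w₀ ≠ v := (H.ne_of_adj hHvw₀).symm
    have hbase : (some w₀ : Option V) ∈ ({some t}ᶜ : Set (Option V)) := by simpa using hw₀t
    rw [connected_iff]
    refine ⟨?_, ⟨⟨some w₀, hbase⟩⟩⟩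
    have reach_some : ∀ (a : V) (ha : (some a : Option V) ∈ ({some t}ᶜ : Set (Option V))),
        a ≠ v → (K.induce {some t}ᶜ).Reachable ⟨some a, ha⟩ ⟨some w₀, hbase⟩ := by
      intro a ha hav
      have hat : a ≠ t := by simpa using ha
      rcases eq_or_ne a w₀ with rfl | haw₀
      · exact Reachable.refl _
      · obtain ⟨p, hpsup⟩ := reachK t a w₀ hav hat hw₀v hw₀t
        have hsub : ∀ z ∈ p.support, z ∈ ({some t}ᶜ : Set (Option V)) := by
          intro z hz
          simpa using (hpsup z hz).2.2
        exact aux_reach_induce p hsub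
    have key : ∀ z : ({some t}ᶜ : Set (Option V)),
        (K.induce {some t}ᶜ).Reachable z ⟨some w₀, hbase⟩ := by
      rintro ⟨z, hzT⟩
      cases z with
      | none =>
        set x' := if x = t then y else x with hx'def
        have hx't : x' ≠ t := by
          rw [hx'def]; split
          · rename_i h; exact fun hc => hxy (h.trans hc.symm)
          · assumption
        have hx'v : x' ≠ v := by
          rw [hx'def]; split
          · exact hyv
          · exact hxv
        have hadjx' : K.Adj none (some x') := by
          rw [hKdef]
          rw [auxApex_adj_none_some]
          rw [hx'def]; split
          · exact Or.inr rfl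
          · exact Or.inl rfl
        have h1 : (K.induce {some t}ᶜ).Adj ⟨none, hzT⟩ ⟨some x', by simpa using hx't⟩ := hadjx'
        exact h1.reachable.trans (reach_some x' (by simpa using hx't) hx'v)
      | some a =>
        have hat : a ≠ t := by simpa using hzT
        rcases eq_or_ne a v with rfl | hav
        · have h1 : (K.induce {some t}ᶜ).Adj ⟨some a, hzT⟩ ⟨some w₀, hbase⟩ := by
            show K.Adj (some a) (some w₀)
            rw [hKdef]
            simpa using hHvw₀
          exact h1.reachable
        · exact reach_some a hzT hav
    intro z₁ z₂
    exact (key z₁).trans (key z₂).symm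
end ApexConn

section Fan
variable {V : Type u}

lemma aux_unsome {H : SimpleGraph V} {x y : V} :
    ∀ (n : ℕ) {a b : V} (p : (auxApex H x y).Walk (some a) (some b)),
      p.length ≤ n → none ∉ p.support →
      ∃ q : H.Walk a b, q.support.map some = p.support ∧
        q.edges.map (Sym2.map some) = p.edges := by
  intro n
  induction n with
  | zero =>
    intro a b p hl hn
    have hnil : p.Nil := Walk.nil_iff_length_eq.mpr (Nat.le_zero.mp hl)
    obtain rfl : a = b := Option.some.inj hnil.eq
    have hpn : p = Walk.nil := hnil.eq_nil
    subst hpn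
    exact ⟨Walk.nil, by simp, by simp⟩
  | succ n ih =>
    intro a b p hl hn
    cases p with
    | nil => exact ⟨Walk.nil, by simp, by simp⟩
    | @cons _ z _ h q =>
      cases z with
      | none =>
        exact absurd (by simp : (none : Option V) ∈ (Walk.cons h q).support) hn
      | some z' =>
        have hH : H.Adj a z' := by rwa [auxApex_adj_some_some] at h
        have hq : none ∉ q.support := fun hc => hn (by simp [hc])
        obtain ⟨q', hs, he⟩ := ih q (Nat.le_of_succ_le_succ (by simpa using hl)) hq
        refine ⟨Walk.cons hH q', ?_, ?_⟩
        · simp [hs]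
        · simp [he, Sym2.map_pair_eq]

lemma aux_fan {G : SimpleGraph V} [DecidableEq V]
    (hpair : ∀ a b : V, (G.induce ({a, b} : Set V)ᶜ).Connected)
    (hthree4 : ∀ a b : Option V, ∃ t : Option V, t ≠ a ∧ t ≠ b)
    {v u₁ u₂ x y : V} (hxv : x ≠ v) (hyv : y ≠ v) (hxy : x ≠ y)
    (hu12 : u₁ ≠ u₂) (hadj1 : G.Adj v u₁) (hadj2 : G.Adj v u₂)
    (hadjxy : G.Adj x y) :
    ∃ (z : V) (C : G.Walk z z), C.IsCycle ∧ s(v, u₁) ∈ C.edges ∧ s(v, u₂) ∈ C.edges ∧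
      s(x, y) ∈ C.edges := by
  classical
  set H := auxDel G v s(v, u₁) s(v, u₂) with hHdef
  set K := auxApex H x y with hKdef
  have hconnK : ∀ c : Option V, (K.induce {c}ᶜ).Connected :=
    aux_apex_conn hpair hxv hyv hxy hu12 hadj1 hadj2
  -- a walk from `none` to `some v` in K
  have hwalk : ∃ p : K.Walk none (some v), True := by
    have hc := hconnK (some x)
    have h1 : (none : Option V) ∈ ({some x}ᶜ : Set (Option V)) := by simp
    have h2 : (some v : Option V) ∈ ({some x}ᶜ : Set (Option V)) := by
      simpa using fun hc' => hxv hc'.symm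
    obtain ⟨p0⟩ := hc.preconnected ⟨none, h1⟩ ⟨some v, h2⟩
    exact ⟨p0.map (auxHomInduce K {some x}ᶜ), trivial⟩
  obtain ⟨p, -⟩ := hwalk
  obtain ⟨z₀, CW, hCW, hnoneCW, hvCW⟩ := aux_cycle_lemma hconnK hthree4 p.length
    (by simp) p le_rfl
  -- rotate the cycle to start at `none`
  set q : K.Walk none none := CW.rotate none hnoneCW with hqdef
  have hqcyc : q.IsCycle := hCW.rotate hnoneCW
  have hvq : some v ∈ q.support :=
    (aux_mem_support_rotate CW hCW.not_nil hnoneCW (some v)).mpr hvCW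
  clear_value q
  obtain ⟨t₁, hadjA, q₁, hq⟩ := (Walk.not_nil_iff).mp hqcyc.not_nil
  cases t₁ with
  | none => exact absurd hadjA K.irrefl
  | some x₁ =>
  have hq₁path : q₁.IsPath ∧ s(none, some x₁) ∉ q₁.edges := by
    have := hqcyc
    rw [hq, Walk.cons_isCycle_iff] at this
    exact this
  have hx₁ : x₁ = x ∨ x₁ = y := by
    have := auxApex_adj_none (H := H) (x := x) (y := y) hadjA
    rcases this with h' | h' <;> [left; right] <;> exact Option.some.inj h' ▸ rfl
  have hq₁rnn : ¬ q₁.reverse.Nil := Walk.not_nil_of_ne (by simp)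
  obtain ⟨s₁, hadjB, r, hqr⟩ := (Walk.not_nil_iff).mp hq₁rnn
  cases s₁ with
  | none => exact absurd hadjB K.irrefl
  | some x₂ =>
  have hx₂ : x₂ = x ∨ x₂ = y := by
    have := auxApex_adj_none (H := H) (x := x) (y := y) hadjB
    rcases this with h' | h' <;> [left; right] <;> exact Option.some.inj h' ▸ rfl
  have hrpath : r.IsPath ∧ (none : Option V) ∉ r.support := by
    have := hq₁path.1.reverse
    rw [hqr, Walk.cons_isPath_iff] at this
    exact this
  have hvr : some v ∈ r.support := by
    have h1 : some v ∈ q₁.support := by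
      have := hvq
      rw [hq, Walk.support_cons] at this
      rcases List.mem_cons.mp this with h' | h'
      · exact absurd h'.symm (by simp)
      · exact h'
    have h2 : some v ∈ q₁.reverse.support := by
      rw [Walk.support_reverse, List.mem_reverse]; exact h1
    rw [hqr, Walk.support_cons] at h2
    rcases List.mem_cons.mp h2 with h' | h'
    · exact absurd h'.symm (by simp)
    · exact h'
  have hx₁v : x₁ ≠ v := by rcases hx₁ with rfl | rfl <;> [exact hxv; exact hyv]
  have hx₂v : x₂ ≠ v := by rcases hx₂ with rfl | rfl <;> [exact hxv; exact hyv]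
  have hx₂x₁ : x₂ ≠ x₁ := by
    intro hcontra
    subst hcontra
    have : r = Walk.nil := aux_path_loop_nil r hrpath.1
    rw [this] at hvr
    simp at hvr
    exact hx₂v hvr.symm
  obtain ⟨q', hs, he⟩ := aux_unsome r.length r le_rfl hrpath.2
  have hq'path : q'.IsPath := by
    apply Walk.IsPath.mk'
    have := hrpath.1.support_nodup
    rw [← hs] at this
    exact this.of_map
  have hvq' : v ∈ q'.support := by
    have := hvr
    rw [← hs] at this
    rcases List.mem_map.mp this with ⟨v', hv', heq⟩
    exact Option.some.inj heq ▸ hv'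
  obtain ⟨g₁, hg₁, g₂, hg₂, hvg₁, hvg₂, hg₁₂⟩ :=
    aux_two_edges_internal q' hq'path hvq' hx₂v.symm hx₁v.symm
  have hedge_id : ∀ g ∈ q'.edges, v ∈ g → g = s(v, u₁) ∨ g = s(v, u₂) := by
    intro g hg hvg
    exact auxDel_edge_at_v (q'.edges_subset_edgeSet hg) hvg
  have he₁ : s(v, u₁) ∈ q'.edges ∧ s(v, u₂) ∈ q'.edges := by
    rcases hedge_id g₁ hg₁ hvg₁ with rfl | rfl <;>
      rcases hedge_id g₂ hg₂ hvg₂ with h2 | h2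
    · exact absurd h2.symm hg₁₂
    · exact ⟨hg₁, h2 ▸ hg₂⟩
    · exact ⟨h2 ▸ hg₂, hg₁⟩
    · exact absurd h2.symm hg₁₂
  have hGx : G.Adj x₂ x₁ := by
    rcases hx₁ with rfl | rfl <;> rcases hx₂ with rfl | rfl
    · exact absurd rfl hx₂x₁
    · exact hadjxy.symm
    · exact hadjxy
    · exact absurd rfl hx₂x₁
  have hHx : H.Adj x₂ x₁ := auxDel_adj_of_ne hx₂v hx₁v hGx
  have hnotin : s(x₁, x₂) ∉ q'.edges := by
    intro hcontra
    cases q' with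
    | nil => simp at hcontra
    | @cons _ d _ h' q₀ =>
      have hpath0 : q₀.IsPath ∧ x₂ ∉ q₀.support := by
        have := hq'path
        rw [Walk.cons_isPath_iff] at this
        exact this
      rcases (by simpa using hcontra :
          (x₁ = x₂ ∧ x₂ = d ∨ x₁ = d) ∨ s(x₁, x₂) ∈ q₀.edges) with h'' | h''
      · rcases h'' with ⟨h1, -⟩ | h1
        · exact hx₂x₁ h1.symm
        · -- x₁ = d : then q₀ : Walk x₁ x₁ is a path, so nil
          subst h1
          have hq₀nil : q₀ = Walk.nil := aux_path_loop_nil q₀ hpath0.1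
          subst hq₀nil
          -- support = [x₂, x₁], but v is internal
          have := hvq'
          simp at this
          rcases this with h3 | h3
          · exact hx₂v h3.symm
          · exact hx₁v h3.symm
      · exact hpath0.2 (aux_mem_support_of_edge q₀ h'' (by simp))
  refine ⟨x₁, (Walk.cons hHx.symm q').transfer G ?_, ?_, ?_, ?_, ?_⟩
  · intro e heC
    have : e ∈ H.edgeSet := (Walk.cons hHx.symm q').edges_subset_edgeSet heC
    rw [hHdef, auxDel, edgeSet_deleteEdges] at this
    exact this.1
  · exact (by
      rw [Walk.cons_isCycle_iff]
      exact ⟨hq'path, hnotin⟩ : (Walk.cons hHx.symm q').IsCycle).transfer _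
  · rw [Walk.edges_transfer, Walk.edges_cons]
    exact List.mem_cons.mpr (Or.inr he₁.1)
  · rw [Walk.edges_transfer, Walk.edges_cons]
    exact List.mem_cons.mpr (Or.inr he₁.2)
  · rw [Walk.edges_transfer, Walk.edges_cons]
    refine List.mem_cons.mpr (Or.inl ?_)
    rcases hx₁ with rfl | rfl <;> rcases hx₂ with rfl | rfl
    · exact absurd rfl hx₂x₁
    · rfl
    · exact Sym2.eq_swap
    · exact absurd rfl hx₂x₁
end Fan

section Main
variable {V : Type u} {V' : Type v}

lemma aux_incident_form {G : SimpleGraph V} {e : Sym2 V} {x : V}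
    (heG : e ∈ G.edgeSet) (hx : x ∈ e) : ∃ u, G.Adj x u ∧ e = s(x, u) := by
  induction e with
  | h a b =>
    rcases Sym2.mem_iff.mp hx with rfl | rfl
    · exact ⟨b, heG, rfl⟩
    · exact ⟨a, (heG : G.Adj a x).symm, Sym2.eq_swap⟩

lemma aux_C13 {G : SimpleGraph V} {v u₁ u₃ : V}
    (hdelv : (G.induce ({v} : Set V)ᶜ).Connected)
    (h1 : G.Adj v u₁) (h3 : G.Adj v u₃) (hne : u₁ ≠ u₃) :
    ∃ (q : G.Walk v v), q.IsCycle ∧ s(v, u₁) ∈ q.edges ∧ s(v, u₃) ∈ q.edges ∧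
      ∀ e ∈ q.edges, v ∈ e → e = s(v, u₁) ∨ e = s(v, u₃) := by
  obtain ⟨P, hPpath, hPav⟩ := aux_avoid_walk (s := ({v} : Set V)) hdelv
    (a := u₁) (b := u₃) (by simpa using h1.ne') (by simpa using h3.ne')
  have hvP : v ∉ P.support := fun hc => hPav v hc rfl
  have hinner : (P.concat h3.symm).IsPath := by
    apply Walk.IsPath.mk'
    rw [Walk.support_concat]
    exact List.Nodup.append hPpath.support_nodup (by simp)
      (by intro z hz hz'; rw [List.mem_singleton] at hz'; exact hvP (hz' ▸ hz))
  have hedges_inner : (P.concat h3.symm).edges = P.edges.concat s(u₃, v) :=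
    Walk.edges_concat P h3.symm
  have hnotin : s(v, u₁) ∉ (P.concat h3.symm).edges := by
    rw [hedges_inner, List.concat_eq_append]
    intro hc
    rcases List.mem_append.mp hc with hc' | hc'
    · exact hvP (aux_mem_support_of_edge P hc' (by simp))
    · rw [List.mem_singleton, Sym2.eq_iff] at hc'
      rcases hc' with ⟨h1', h2'⟩ | ⟨h1', h2'⟩
      · exact h3.ne h1'
      · exact hne h2'
  refine ⟨Walk.cons h1 (P.concat h3.symm), ?_, ?_, ?_, ?_⟩
  · rw [Walk.cons_isCycle_iff]
    exact ⟨hinner, hnotin⟩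
  · simp
  · rw [Walk.edges_cons, hedges_inner, List.concat_eq_append]
    refine List.mem_cons.mpr (Or.inr (List.mem_append.mpr (Or.inr ?_)))
    rw [List.mem_singleton]
    exact Sym2.eq_swap
  · intro e he hv
    rw [Walk.edges_cons, hedges_inner, List.concat_eq_append] at he
    rcases List.mem_cons.mp he with rfl | he'
    · exact Or.inl rfl
    · rcases List.mem_append.mp he' with hc' | hc'
      · exact absurd (aux_mem_support_of_edge P hc' hv) hvP
      · rw [List.mem_singleton] at hc'
        subst hc'
        exact Or.inr Sym2.eq_swap

lemma aux_W_pair {G : SimpleGraph V} {G' : SimpleGraph V'}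
    (f : G.edgeSet → G'.edgeSet) (hinj : Function.Injective f)
    (hcirc : ∀ C : Set (Sym2 V), IsCircuit G C → IsCircuit G' (mapEdges G G' f C))
    (w : V') {z : V} (p : G.Walk z z) (hp : p.IsCycle)
    {e : Sym2 V} (he : e ∈ p.edges) (heG : e ∈ G.edgeSet)
    (hew : w ∈ (f ⟨e, heG⟩ : Sym2 V')) :
    ∃ (e₂ : Sym2 V) (he₂G : e₂ ∈ G.edgeSet), e₂ ∈ p.edges ∧
      w ∈ (f ⟨e₂, he₂G⟩ : Sym2 V') ∧ e₂ ≠ e ∧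
      ∀ (e'' : Sym2 V) (he''G : e'' ∈ G.edgeSet), e'' ∈ p.edges →
        w ∈ (f ⟨e'', he''G⟩ : Sym2 V') → e'' = e ∨ e'' = e₂ := by
  classical
  have hCc : IsCircuit G {e' | e' ∈ p.edges} := ⟨z, p, hp, rfl⟩
  obtain ⟨z', p', hp', hset⟩ := hcirc _ hCc
  have hfe : (f ⟨e, heG⟩ : Sym2 V') ∈ p'.edges := by
    have hm : (f ⟨e, heG⟩ : Sym2 V') ∈ mapEdges G G' f {e' | e' ∈ p.edges} :=
      ⟨⟨e, heG⟩, he, rfl⟩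
    rw [hset] at hm; exact hm
  obtain ⟨g', hg', hwg', hg'ne, huniq⟩ := aux_cycle_two_edges p' hp' hfe hew
  have hg'map : g' ∈ mapEdges G G' f {e' | e' ∈ p.edges} := by
    rw [hset]; exact hg'
  obtain ⟨eb, hebp, hebeq⟩ := hg'map
  refine ⟨(eb : Sym2 V), eb.2, hebp, ?_, ?_, ?_⟩
  · have h1 : (⟨(eb : Sym2 V), eb.2⟩ : G.edgeSet) = eb := rfl
    rw [h1, hebeq]; exact hwg'
  · intro hcontra
    apply hg'ne
    rw [← hebeq]
    exact congrArg (fun t => ((f t : G'.edgeSet) : Sym2 V')) (Subtype.ext hcontra)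
  · intro e'' he''G he''p hwe''
    have hfe'' : (f ⟨e'', he''G⟩ : Sym2 V') ∈ p'.edges := by
      have hm : (f ⟨e'', he''G⟩ : Sym2 V') ∈ mapEdges G G' f {e' | e' ∈ p.edges} :=
        ⟨⟨e'', he''G⟩, he''p, rfl⟩
      rw [hset] at hm; exact hm
    rcases huniq _ hfe'' hwe'' with h1 | h1
    · left
      exact congrArg Subtype.val (hinj (Subtype.ext h1))
    · right
      have h2 : f ⟨e'', he''G⟩ = f eb := Subtype.ext (h1.trans hebeq.symm)
      exact congrArg Subtype.val (hinj h2)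


/-- Under a circuit injection from a 3-connected graph, the image
of every star is a star or an independent set of edges. -/
theorem statement2 {V : Type u} {V' : Type v} (G : SimpleGraph V) (G' : SimpleGraph V')
    (h3 : ThreeConnected G) (f : G.edgeSet → G'.edgeSet)
    (hf : IsCircuitInjection G G' f) (x : V) :
    (∃ w : V', mapEdges G G' f (G.incidenceSet x) = G'.incidenceSet w) ∨
      IndepEdges (mapEdges G G' f (G.incidenceSet x)) := by
  classical
  obtain ⟨hcard, hpair⟩ := h3
  obtain ⟨hinj, hsurj, hcirc, -⟩ := hf
  by_cases hstar : ∃ (w : V') (e₁ e₂ : Sym2 V) (h₁ : e₁ ∈ G.edgeSet) (h₂ : e₂ ∈ G.edgeSet),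
      e₁ ∈ G.incidenceSet x ∧ e₂ ∈ G.incidenceSet x ∧ e₁ ≠ e₂ ∧
      w ∈ (f ⟨e₁, h₁⟩ : Sym2 V') ∧ w ∈ (f ⟨e₂, h₂⟩ : Sym2 V')
  · -- star case
    left
    obtain ⟨w, e₁, e₂, h₁G, h₂G, hinc₁, hinc₂, hne12, hw1, hw2⟩ := hstar
    refine ⟨w, ?_⟩
    obtain ⟨u₁, hadj₁, he₁form⟩ := aux_incident_form h₁G hinc₁.2
    obtain ⟨u₂, hadj₂, he₂form⟩ := aux_incident_form h₂G hinc₂.2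
    have hu12 : u₁ ≠ u₂ := by
      intro hc; exact hne12 (by rw [he₁form, he₂form, hc])
    set W : Set (Sym2 V) := {e | ∃ h : e ∈ G.edgeSet, w ∈ (f ⟨e, h⟩ : Sym2 V')} with hWdef
    have hW₁ : e₁ ∈ W := ⟨h₁G, hw1⟩
    have hW₂ : e₂ ∈ W := ⟨h₂G, hw2⟩
    have hdelv : ∀ z : V, (G.induce ({z} : Set V)ᶜ).Connected := by
      intro z
      have := hpair z z
      rwa [Set.pair_eq_singleton] at this
    have hthreeO : ∀ a b : Option V, ∃ t : Option V, t ≠ a ∧ t ≠ b := by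
      have hcardO : (4 : Cardinal) ≤ Cardinal.mk (Option V) := by
        rw [Cardinal.mk_option]
        exact hcard.trans (self_le_add_right _ _)
      exact aux_third hcardO
    -- (ii) every edge of W is incident to x
    have hWsub : ∀ e ∈ W, x ∈ e := by
      intro h0 hh0
      obtain ⟨hG0, hw0⟩ := hh0
      by_contra hxe
      obtain ⟨a', b', hab, ha'x, hb'x, hadjab⟩ :
          ∃ a' b' : V, h0 = s(a', b') ∧ a' ≠ x ∧ b' ≠ x ∧ G.Adj a' b' := by
        induction h0 with
        | h a b =>
          refine ⟨a, b, rfl, ?_, ?_, hG0⟩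
          · intro hc; exact hxe (by simp [hc])
          · intro hc; exact hxe (by simp [hc])
      obtain ⟨z, C, hC, hCe₁, hCe₂, hCh⟩ := aux_fan hpair hthreeO ha'x hb'x
        (G.ne_of_adj hadjab) hu12 hadj₁ hadj₂ hadjab
      rw [← he₁form] at hCe₁
      rw [← he₂form] at hCe₂
      rw [← hab] at hCh
      obtain ⟨ep, hepG, hepmem, hepw, hepne, huniq⟩ :=
        aux_W_pair f hinj hcirc w C hC hCe₁ h₁G hw1
      have hp2 : e₂ = e₁ ∨ e₂ = ep := huniq e₂ h₂G hCe₂ hw2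
      have hph : h0 = e₁ ∨ h0 = ep := huniq h0 hG0 hCh hw0
      have he₂ep : e₂ = ep := hp2.resolve_left (fun h => hne12 h.symm)
      have hh0ep : h0 = ep := hph.resolve_left (by
        intro hc; exact hxe (hc ▸ hinc₁.2))
      rw [hh0ep, ← he₂ep] at hxe
      exact hxe hinc₂.2
    -- (i) every star edge is in W
    have hWsup : ∀ e ∈ G.incidenceSet x, e ∈ W := by
      intro e₃ hinc₃
      obtain ⟨h₃G, hx₃⟩ := hinc₃
      by_cases h31 : e₃ = e₁
      · exact h31 ▸ hW₁
      obtain ⟨u₃, hadj₃, he₃form⟩ := aux_incident_form h₃G hx₃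
      have hu13 : u₁ ≠ u₃ := by
        intro hc; exact h31 (by rw [he₃form, he₁form, hc])
      by_contra he₃W
      obtain ⟨q, hq, hqe₁, hqe₃, hqv⟩ := aux_C13 (hdelv x) hadj₁ hadj₃ hu13
      rw [← he₁form] at hqe₁
      rw [← he₃form] at hqe₃
      obtain ⟨ep, hepG, hepmem, hepw, hepne, huniq⟩ :=
        aux_W_pair f hinj hcirc w q hq hqe₁ h₁G hw1
      have hepx : x ∈ ep := hWsub ep ⟨hepG, hepw⟩
      have := hqv ep hepmem hepx
      rw [← he₁form, ← he₃form] at this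
      rcases this with h' | h'
      · exact hepne h'
      · exact he₃W (h' ▸ ⟨hepG, hepw⟩)
    -- conclude the set equality
    ext g
    constructor
    · rintro ⟨eb, hebinc, rfl⟩
      obtain ⟨hG, hw'⟩ := hWsup _ hebinc
      exact ⟨(f eb).2, by
        have h1 : (⟨(eb : Sym2 V), hG⟩ : G.edgeSet) = eb := Subtype.ext rfl
        rw [← h1]
        exact hw'⟩
    · rintro ⟨hgE, hgw⟩
      obtain ⟨eb, heb⟩ := hsurj ⟨g, hgE⟩
      refine ⟨eb, ?_, by rw [heb]⟩
      have hebW : (eb : Sym2 V) ∈ W := ⟨eb.2, by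
        have h1 : (⟨(eb : Sym2 V), eb.2⟩ : G.edgeSet) = eb := rfl
        rw [h1, heb]
        exact hgw⟩
      exact ⟨eb.2, hWsub _ hebW⟩
  · -- independent case
    right
    rintro g₁ ⟨eb₁, hinc₁, rfl⟩ g₂ ⟨eb₂, hinc₂, rfl⟩ hne w hw1 hw2
    apply hstar
    refine ⟨w, eb₁, eb₂, eb₁.2, eb₂.2, hinc₁, hinc₂, ?_, hw1, hw2⟩
    intro hc
    exact hne (by rw [Subtype.ext hc])
end Main
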